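/- In the discrete auto rate-tuning model, the effective learning rate ratio of two layers is stationary exactly at 1: for any time step i, one has R(j) = R(i) for all j ≥ i if and only if R(i) = 1. -/

import Mathlib

/-- Discrete auto rate-tuning model: the effective learning rate ratio of two
layers is stationary exactly at 1. -/
theorem elr_ratio_stationary_iff_one
    (cl ck : ℝ) (hcl : 0 < cl) (hck : 0 < ck)
    (lam : ℕ → ℝ) (hlam : ∀ i, 0 < lam i)
    (sl sk : ℕ → ℝ) (hsl0 : 0 < sl 0) (hsk0 : 0 < sk 0)
    (hsl : ∀ i, sl (i + 1) = sl i + (lam i) ^ 2 * cl ^ 2 / sl i)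
    (hsk : ∀ i, sk (i + 1) = sk i + (lam i) ^ 2 * ck ^ 2 / sk i)
    (R : ℕ → ℝ) (hR : ∀ i, R i = cl * sk i / (ck * sl i))
    (i : ℕ) :
    (∀ j, i ≤ j → R j = R i) ↔ R i = 1 := by
  have hslpos : ∀ n, 0 < sl n := by
    intro n
    induction n with
    | zero => exact hsl0
    | succ n ih => rw [hsl n]; have := hlam n; positivity
  have hskpos : ∀ n, 0 < sk n := by
    intro n
    induction n with
    | zero => exact hsk0
    | succ n ih => rw [hsk n]; have := hlam n; positivity
  constructor
  · intro h
    have h1 := h (i + 1) (Nat.le_succ i)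
    rw [hR (i + 1), hR i, hsl i, hsk i] at h1
    have hsli := hslpos i
    have hski := hskpos i
    have hlami := hlam i
    have hsli' := hsli.ne'
    have hski' := hski.ne'
    have hcl' := hcl.ne'
    have hck' := hck.ne'
    field_simp at h1
    have h2 : lam i ^ 2 * cl * ck * ((ck * sl i) ^ 2 - (cl * sk i) ^ 2) = 0 := by
      linear_combination (cl * ck) * h1
    have hne : lam i ^ 2 * cl * ck ≠ 0 := by positivity
    have hsq : (cl * sk i) ^ 2 = (ck * sl i) ^ 2 := by
      rcases mul_eq_zero.mp h2 with h' | h'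
      · exact absurd h' hne
      · linarith
    have key : cl * sk i = ck * sl i := by
      nlinarith [mul_pos hcl hski, mul_pos hck hsli]
    rw [hR i, key]
    exact div_self (mul_pos hck hsli).ne'
  · intro h1
    have h2 := h1
    rw [hR i] at h2
    have key : cl * sk i = ck * sl i := by
      rw [div_eq_one_iff_eq (mul_pos hck (hslpos i)).ne'] at h2
      exact h2
    have main : ∀ j, i ≤ j → cl * sk j = ck * sl j := by
      intro j hj
      induction j, hj using Nat.le_induction with
      | base => exact key
      | succ n hn ih =>
        have hsln := (hslpos n).ne'
        have hskn := (hskpos n).ne'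
        rw [hsk n, hsl n]
        field_simp
        linear_combination (sk n * sl n - lam n ^ 2 * cl * ck) * ih
    intro j hj
    rw [hR j, main j hj, h1]
    exact div_self (mul_pos hck (hslpos j)).ne'
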